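/- For every k ≥ 1 consider the constructor TRS R_k over the constructors s (unary) and 0 (constant) and the single k-ary defined symbol f_k (all argument positions normal), with the k rules f_k(s(x1),x2,...,xk) → f_k(x1,x2,...,xk); f_k(0,s(x2),x3,...,xk) → f_k(x2,x2,x3,...,xk); ...; f_k(0,...,0,s(xk)) → f_k(xk,...,xk,xk). Then R_k is compatible with a polynomial path order ⊐pop* (hence predicative recursive), and there is a rational constant c_k > 0 such that for all n ≥ 1 the term f_k(s^n(0),...,s^n(0)) rewrites to f_k(0,...,0) in at least c_k·n^k steps; consequently the innermost runtime complexity of R_k satisfies rc(n) = Ω(n^k). -/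

import Mathlib

/-! # Preamble: term rewriting, polynomial path orders, predicative interpretations

Formalization of the setting of Avanzini & Moser, "Polynomial Path Orders".
Terms are modelled with explicit variables indexed by `ℕ` and a signature `F`;
arities (`ar`), the partitioning into defined symbols and constructors
(`isDef`), the safe mapping (`safe`, value `true` meaning "safe position",
0-based) and the precedence (a preorder `ge`) are explicit parameters.
Multiset comparisons inside inductively defined orders are stated in
Skolemized form (the witnessing decompositions are constructor arguments). -/

set_option maxHeartbeats 1000000

namespace PPO

/-- First-order terms over a signature `F` (arities are tracked separately),
with variables indexed by `ℕ`. -/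
inductive Tm (F : Type) : Type
  | var : ℕ → Tm F
  | app : F → List (Tm F) → Tm F

namespace Tm
variable {F : Type}

/-- The size `|t|` of a term: number of occurrences of variables and function symbols. -/
def size : Tm F → ℕ
  | .var _ => 1
  | .app _ ts => 1 + (ts.attach.map (fun t => size t.1)).sum
decreasing_by
  simp only [Tm.app.sizeOf_spec]; have := List.sizeOf_lt_of_mem t.2; omega

/-- The depth `dp(t)` of a term. -/
def depth : Tm F → ℕ
  | .var _ => 1
  | .app _ ts => 1 + (ts.attach.map (fun t => depth t.1)).foldr max 0
decreasing_by
  simp only [Tm.app.sizeOf_spec]; have := List.sizeOf_lt_of_mem t.2; omega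

/-- Applying a substitution to a term. -/
def subst (σ : ℕ → Tm F) : Tm F → Tm F
  | .var x => σ x
  | .app f ts => .app f (ts.attach.map (fun t => subst σ t.1))
decreasing_by
  simp only [Tm.app.sizeOf_spec]; have := List.sizeOf_lt_of_mem t.2; omega

/-- The list of variable occurrences of a term. -/
def varList : Tm F → List ℕ
  | .var x => [x]
  | .app _ ts => (ts.attach.map (fun t => varList t.1)).foldr (· ++ ·) []
decreasing_by
  simp only [Tm.app.sizeOf_spec]; have := List.sizeOf_lt_of_mem t.2; omega

end Tm

variable {F : Type}

/-- Values: terms built from constructors (symbols `f` with `isDef f = false`)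
and variables only. -/
inductive IsValue (isDef : F → Bool) : Tm F → Prop
  | var (x) : IsValue isDef (.var x)
  | app (f ts) : isDef f = false → (∀ t ∈ ts, IsValue isDef t) → IsValue isDef (.app f ts)

/-- Arity-correct terms. -/
inductive WFT (ar : F → ℕ) : Tm F → Prop
  | var (x) : WFT ar (.var x)
  | app (f ts) : ts.length = ar f → (∀ t ∈ ts, WFT ar t) → WFT ar (.app f ts)

/-- Basic terms: a defined symbol applied to values. -/
def IsBasic (isDef : F → Bool) (t : Tm F) : Prop :=
  ∃ f ts, t = Tm.app f ts ∧ isDef f = true ∧ ∀ u ∈ ts, IsValue isDef u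

/-- Subterm relation (reflexive). -/
inductive Sub : Tm F → Tm F → Prop
  | refl (t) : Sub t t
  | arg (f) (ts : List (Tm F)) (t u) : t ∈ ts → Sub t u → Sub (.app f ts) u

/-- Proper (strict) subterm. -/
def PSub (s u : Tm F) : Prop := ∃ f ts, s = Tm.app f ts ∧ ∃ t ∈ ts, Sub t u

/-- A well-formed rewrite rule: arity-correct sides, the left-hand side is not a
variable, and all variables of the right-hand side occur in the left-hand side. -/
def WFRule (ar : F → ℕ) (ρ : Tm F × Tm F) : Prop :=
  WFT ar ρ.1 ∧ WFT ar ρ.2 ∧ (∀ x ∈ ρ.2.varList, x ∈ ρ.1.varList) ∧ ¬ ∃ x, ρ.1 = Tm.var x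

/-- A (finite) TRS is modelled as a list of rewrite rules. -/
def WFTRS (ar : F → ℕ) (R : List (Tm F × Tm F)) : Prop := ∀ ρ ∈ R, WFRule ar ρ

/-- A constructor TRS: all left-hand sides are basic terms. -/
def ConstructorTRS (ar : F → ℕ) (isDef : F → Bool) (R : List (Tm F × Tm F)) : Prop :=
  WFTRS ar R ∧ ∀ ρ ∈ R, IsBasic isDef ρ.1

/-- One-step rewrite relation: closure of the rules under contexts and substitutions. -/
inductive Rew (R : List (Tm F × Tm F)) : Tm F → Tm F → Prop
  | root (l r : Tm F) (σ : ℕ → Tm F) : (l, r) ∈ R → Rew R (l.subst σ) (r.subst σ)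
  | congr (f) (ts₁ ts₂ : List (Tm F)) (s t : Tm F) : Rew R s t →
      Rew R (.app f (ts₁ ++ s :: ts₂)) (.app f (ts₁ ++ t :: ts₂))

/-- Normal forms. -/
def IsNF (R : List (Tm F × Tm F)) (t : Tm F) : Prop := ∀ u, ¬ Rew R t u

/-- Innermost rewriting: the arguments of the contracted redex are normal forms. -/
inductive IRew (R : List (Tm F × Tm F)) : Tm F → Tm F → Prop
  | root (f : F) (ls : List (Tm F)) (r : Tm F) (σ : ℕ → Tm F) :
      (Tm.app f ls, r) ∈ R → (∀ l ∈ ls, IsNF R (l.subst σ)) →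
      IRew R ((Tm.app f ls).subst σ) (r.subst σ)
  | congr (f) (ts₁ ts₂ : List (Tm F)) (s t : Tm F) : IRew R s t →
      IRew R (.app f (ts₁ ++ s :: ts₂)) (.app f (ts₁ ++ t :: ts₂))

/-- `n`-fold composition of a relation. -/
def IterRel {α : Type*} (r : α → α → Prop) : ℕ → α → α → Prop
  | 0, a, b => a = b
  | n + 1, a, b => ∃ c, r a c ∧ IterRel r n c b

/-- Strict part `≻` of a preorder. -/
def PStrict {G : Type*} (ge : G → G → Prop) (f g : G) : Prop := ge f g ∧ ¬ ge g f

/-- Equivalence `∼` induced by a preorder. -/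
def PEquiv {G : Type*} (ge : G → G → Prop) (f g : G) : Prop := ge f g ∧ ge g f

/-- A precedence is a preorder on the signature. -/
def IsPrecedence {G : Type*} (ge : G → G → Prop) : Prop :=
  (∀ f, ge f f) ∧ ∀ f g h, ge f g → ge g h → ge f h

/-- Admissible precedence: a precedence such that equivalent symbols are both
defined or both constructors. -/
def Admissible (isDef : F → Bool) (ge : F → F → Prop) : Prop :=
  IsPrecedence ge ∧ ∀ f g, PEquiv ge f g → isDef f = isDef g

/-- A safe mapping: all argument positions of constructors are safe.
(`safe f i = true` means that the `i`-th argument position (0-based) of `f` is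
safe; positions with `safe f i = false` are normal.) -/
def SafeMap (ar : F → ℕ) (isDef : F → Bool) (safe : F → ℕ → Bool) : Prop :=
  ∀ f, isDef f = false → ∀ i < ar f, safe f i = true

/-- Safe equivalence `≈s`: equality up to equivalence of root symbols and
permutation of arguments, where the permutations respect the partitioning into
safe and normal argument positions. -/
inductive EqS (ge : F → F → Prop) (safe : F → ℕ → Bool) : Tm F → Tm F → Prop
  | refl (t) : EqS ge safe t t
  | app (f g) (ss ts : List (Tm F)) (π : Fin ss.length ≃ Fin ts.length) :
      PEquiv ge f g →
      (∀ i : Fin ss.length, EqS ge safe (ss.get i) (ts.get (π i))) →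
      (∀ i : Fin ss.length, safe f i.val = safe g (π i).val) →
      EqS ge safe (.app f ss) (.app g ts)

/-- `Below ge f t` expresses `t ∈ T(F≺f, V)`: all function symbols occurring in
`t` are strictly below `f` in the precedence. -/
inductive Below (ge : F → F → Prop) (f : F) : Tm F → Prop
  | var (x) : Below ge f (.var x)
  | app (g ts) : PStrict ge f g → (∀ t ∈ ts, Below ge f t) → Below ge f (.app g ts)

/-- Strict multiset extension of an order `gt` with compatible equivalence `eqv`
(Dershowitz–Manna extension on `eqv`-equivalence classes): `N` is obtained from
`M` by replacing a nonempty sub-multiset `X` by a multiset `Y` of elements each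
of which lies strictly below some element of `X`; the remainders `Z₁, Z₂` agree
up to `eqv`. -/
def MulExt {α : Type*} (gt eqv : α → α → Prop) (M N : Multiset α) : Prop :=
  ∃ Z₁ Z₂ X Y : Multiset α,
    M = Z₁ + X ∧ N = Z₂ + Y ∧ Multiset.Rel eqv Z₁ Z₂ ∧ X ≠ 0 ∧ ∀ y ∈ Y, ∃ x ∈ X, gt x y

/-- Weak multiset extension: strict decrease, or equality of the multisets of
equivalence classes. -/
def MulExtW {α : Type*} (gt eqv : α → α → Prop) (M N : Multiset α) : Prop :=
  MulExt gt eqv M N ∨ Multiset.Rel eqv M N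

/-- The multiset of arguments of `f(ss)` at positions with safeness-flag `b`
(`b = false`: normal arguments, `b = true`: safe arguments). -/
def argsWhere (safe : F → ℕ → Bool) (b : Bool) (f : F) (ss : List (Tm F)) : Multiset (Tm F) :=
  (((ss.zipIdx.map Prod.swap).filter (fun p => safe f p.1 = b)).map Prod.snd : List (Tm F))

/-- The auxiliary order `⊐sq` of the polynomial path order. -/
inductive GtSq (isDef : F → Bool) (ge : F → F → Prop) (safe : F → ℕ → Bool) :
    Tm F → Tm F → Prop
  | sub (f) (ss : List (Tm F)) (i : Fin ss.length) (t) :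
      (isDef f = true → safe f i.val = false) →
      GtSq isDef ge safe (ss.get i) t → GtSq isDef ge safe (.app f ss) t
  | subE (f) (ss : List (Tm F)) (i : Fin ss.length) (t) :
      (isDef f = true → safe f i.val = false) →
      EqS ge safe (ss.get i) t → GtSq isDef ge safe (.app f ss) t
  | prec (f g) (ss ts : List (Tm F)) : isDef f = true → PStrict ge f g →
      (∀ t ∈ ts, GtSq isDef ge safe (.app f ss) t) →
      GtSq isDef ge safe (.app f ss) (.app g ts)

/-- The polynomial path order `⊐pop*`.

The multiset comparisons of the `equiv` case (clause (3) of the definition)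
are stated in Skolemized form: the decompositions witnessing the strict/weak
multiset decreases are explicit constructor arguments.  Constructors `equivS`
and `equivE` correspond to the two alternatives (strict decrease, resp.
equality of the multisets of equivalence classes) of the weak multiset
comparison of the safe arguments. -/
inductive GtPop (isDef : F → Bool) (ge : F → F → Prop) (safe : F → ℕ → Bool) :
    Tm F → Tm F → Prop
  | sub (f) (ss : List (Tm F)) (i : Fin ss.length) (t) :
      GtPop isDef ge safe (ss.get i) t → GtPop isDef ge safe (.app f ss) t
  | subE (f) (ss : List (Tm F)) (i : Fin ss.length) (t) :
      EqS ge safe (ss.get i) t → GtPop isDef ge safe (.app f ss) t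
  | prec (f g) (ss ts : List (Tm F)) : isDef f = true → PStrict ge f g →
      (∀ j : Fin ts.length, safe g j.val = false →
        GtSq isDef ge safe (.app f ss) (ts.get j)) →
      (∀ j : Fin ts.length, safe g j.val = true →
        GtPop isDef ge safe (.app f ss) (ts.get j)) →
      (∀ j j' : Fin ts.length, safe g j.val = true → safe g j'.val = true →
        ¬ Below ge f (ts.get j) → ¬ Below ge f (ts.get j') → j = j') →
      GtPop isDef ge safe (.app f ss) (.app g ts)
  | equivS (f g) (ss ts : List (Tm F))
      (Z₁ Z₂ X : Multiset (Tm F)) (Y : List (Tm F)) (w : Fin Y.length → Tm F)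
      (W₁ W₂ X' : Multiset (Tm F)) (Y' : List (Tm F)) (w' : Fin Y'.length → Tm F) :
      isDef f = true → PEquiv ge f g →
      argsWhere safe false f ss = Z₁ + X →
      argsWhere safe false g ts = Z₂ + (↑Y : Multiset (Tm F)) →
      Multiset.Rel (EqS ge safe) Z₁ Z₂ → X ≠ 0 →
      (∀ j, w j ∈ X) → (∀ j, GtPop isDef ge safe (w j) (Y.get j)) →
      argsWhere safe true f ss = W₁ + X' →
      argsWhere safe true g ts = W₂ + (↑Y' : Multiset (Tm F)) →
      Multiset.Rel (EqS ge safe) W₁ W₂ → X' ≠ 0 →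
      (∀ j, w' j ∈ X') → (∀ j, GtPop isDef ge safe (w' j) (Y'.get j)) →
      GtPop isDef ge safe (.app f ss) (.app g ts)
  | equivE (f g) (ss ts : List (Tm F))
      (Z₁ Z₂ X : Multiset (Tm F)) (Y : List (Tm F)) (w : Fin Y.length → Tm F) :
      isDef f = true → PEquiv ge f g →
      argsWhere safe false f ss = Z₁ + X →
      argsWhere safe false g ts = Z₂ + (↑Y : Multiset (Tm F)) →
      Multiset.Rel (EqS ge safe) Z₁ Z₂ → X ≠ 0 →
      (∀ j, w j ∈ X) → (∀ j, GtPop isDef ge safe (w j) (Y.get j)) →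
      Multiset.Rel (EqS ge safe) (argsWhere safe true f ss) (argsWhere safe true g ts) →
      GtPop isDef ge safe (.app f ss) (.app g ts)

/-- The polynomial path order with parameter substitution `⊐pop*ps`: as
`⊐pop*`, but in the `equiv` case the safe arguments `tⱼ` of the right-hand side
are compared via `s ⊐pop*ps tⱼ` and must lie in `T(F≺f, V)`. -/
inductive GtPopPS (isDef : F → Bool) (ge : F → F → Prop) (safe : F → ℕ → Bool) :
    Tm F → Tm F → Prop
  | sub (f) (ss : List (Tm F)) (i : Fin ss.length) (t) :
      GtPopPS isDef ge safe (ss.get i) t → GtPopPS isDef ge safe (.app f ss) t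
  | subE (f) (ss : List (Tm F)) (i : Fin ss.length) (t) :
      EqS ge safe (ss.get i) t → GtPopPS isDef ge safe (.app f ss) t
  | prec (f g) (ss ts : List (Tm F)) : isDef f = true → PStrict ge f g →
      (∀ j : Fin ts.length, safe g j.val = false →
        GtSq isDef ge safe (.app f ss) (ts.get j)) →
      (∀ j : Fin ts.length, safe g j.val = true →
        GtPopPS isDef ge safe (.app f ss) (ts.get j)) →
      (∀ j j' : Fin ts.length, safe g j.val = true → safe g j'.val = true →
        ¬ Below ge f (ts.get j) → ¬ Below ge f (ts.get j') → j = j') →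
      GtPopPS isDef ge safe (.app f ss) (.app g ts)
  | equiv (f g) (ss ts : List (Tm F))
      (Z₁ Z₂ X : Multiset (Tm F)) (Y : List (Tm F)) (w : Fin Y.length → Tm F) :
      isDef f = true → PEquiv ge f g →
      argsWhere safe false f ss = Z₁ + X →
      argsWhere safe false g ts = Z₂ + (↑Y : Multiset (Tm F)) →
      Multiset.Rel (EqS ge safe) Z₁ Z₂ → X ≠ 0 →
      (∀ j, w j ∈ X) → (∀ j, GtPopPS isDef ge safe (w j) (Y.get j)) →
      (∀ j : Fin ts.length, safe g j.val = true →
        GtPopPS isDef ge safe (.app f ss) (ts.get j)) →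
      (∀ j : Fin ts.length, safe g j.val = true → Below ge f (ts.get j)) →
      GtPopPS isDef ge safe (.app f ss) (.app g ts)

/-- A constructor TRS is predicative recursive w.r.t. a given admissible
precedence and safe mapping if all its rules are oriented by the induced
polynomial path order. -/
def PredicativeRecursive (ar : F → ℕ) (isDef : F → Bool) (safe : F → ℕ → Bool)
    (ge : F → F → Prop) (R : List (Tm F × Tm F)) : Prop :=
  ConstructorTRS ar isDef R ∧ Admissible isDef ge ∧ SafeMap ar isDef safe ∧
    ∀ ρ ∈ R, GtPop isDef ge safe ρ.1 ρ.2

/-- The maximum of the depths of the normal arguments of `f(ss)`. -/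
def maxNormalDepth (safe : F → ℕ → Bool) (f : F) (ss : List (Tm F)) : ℕ :=
  (((ss.zipIdx.map Prod.swap).filter (fun p => safe f p.1 = false)).map (fun p => Tm.depth p.2)).foldr max 0

/-- One-hole contexts. -/
inductive Ctx (F : Type) : Type
  | hole : Ctx F
  | app : F → List (Tm F) → Ctx F → List (Tm F) → Ctx F

/-- Plugging a term into a context. -/
def Ctx.fill : Ctx F → Tm F → Tm F
  | .hole, s => s
  | .app f ts₁ C ts₂, s => .app f (ts₁ ++ [C.fill s] ++ ts₂)

/-! ## Terms with sequence arguments and sequences -/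

/-- Terms with sequence arguments, and sequences, over a (normalised) signature
`G`.  Well-formedness is captured by `IsSTm`/`IsSSeq` below. -/
inductive SExp (G : Type) : Type
  | var : ℕ → SExp G
  | app : G → List (SExp G) → SExp G
  | lst : List (SExp G) → SExp G

namespace SExp
variable {G : Type}

/-- View an element of `T ∪ S` as a list of elements (a term is a singleton). -/
def toL : SExp G → List (SExp G)
  | .lst ts => ts
  | .var x => [.var x]
  | .app f as => [.app f as]

/-- Concatenation of terms/sequences. -/
def cat (a b : SExp G) : SExp G := .lst (a.toL ++ b.toL)

/-- Concatenation `c₁ @ ⋯ @ cₙ` of a list of terms/sequences. -/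
def catAll (cs : List (SExp G)) : SExp G := .lst ((cs.map toL).foldr (· ++ ·) [])

/-- The length `len(a)`: the number of elements. -/
def slen (a : SExp G) : ℕ := a.toL.length

/-- The width `w(a)`. -/
def width : SExp G → ℕ
  | .var _ => 1
  | .app _ as => (as.attach.map (fun a => width a.1)).foldr max 1
  | .lst ts => (ts.attach.map (fun t => width t.1)).sum
decreasing_by
  · simp only [SExp.app.sizeOf_spec]; have := List.sizeOf_lt_of_mem a.2; omega
  · simp only [SExp.lst.sizeOf_spec]; have := List.sizeOf_lt_of_mem t.2; omega

end SExp

/-- Ground terms/sequences: no variable occurs. -/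
inductive SGround {G : Type} : SExp G → Prop
  | app (f) (as : List (SExp G)) : (∀ a ∈ as, SGround a) → SGround (.app f as)
  | lst (ts : List (SExp G)) : (∀ t ∈ ts, SGround t) → SGround (.lst ts)

mutual
/-- Well-formed terms with sequence arguments (w.r.t. arities `nar` on `G`). -/
inductive IsSTm {G : Type} (nar : G → ℕ) : SExp G → Prop
  | var (x) : IsSTm nar (.var x)
  | app (f) (as : List (SExp G)) : as.length = nar f →
      (∀ a ∈ as, IsSSeq nar a) → IsSTm nar (.app f as)

/-- Well-formed sequences: lists of well-formed terms. -/
inductive IsSSeq {G : Type} (nar : G → ℕ) : SExp G → Prop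
  | lst (ts : List (SExp G)) : (∀ t ∈ ts, IsSTm nar t) → IsSSeq nar (.lst ts)
end

/-- Equivalence `≈` on terms/sequences: equality up to permutation of
arguments/elements and equivalence of root symbols. -/
inductive SEqv {G : Type} (ge : G → G → Prop) : SExp G → SExp G → Prop
  | var (x) : SEqv ge (.var x) (.var x)
  | app (f g) (as bs : List (SExp G)) (π : Fin as.length ≃ Fin bs.length) :
      PEquiv ge f g → (∀ i, SEqv ge (as.get i) (bs.get (π i))) →
      SEqv ge (.app f as) (.app g bs)
  | lst (ts us : List (SExp G)) (π : Fin ts.length ≃ Fin us.length) :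
      (∀ i, SEqv ge (ts.get i) (us.get (π i))) → SEqv ge (.lst ts) (.lst us)

/-- The finite approximations `⊐ₖ,ₗ` of the auxiliary order of the polynomial
path order on sequences.  In the `lst` case (clause (4)), the weak comparisons
`aᵢ ⊒ cᵢ` are recorded via an explicit strictness marker `str`. -/
inductive GtA {G : Type} (ge : G → G → Prop) (k : ℕ) : ℕ → SExp G → SExp G → Prop
  | sub (l f) (as : List (SExp G)) (i : Fin as.length) (b) :
      GtA ge k l (as.get i) b → GtA ge k l (.app f as) b
  | subE (l f) (as : List (SExp G)) (i : Fin as.length) (b) :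
      SEqv ge (as.get i) b → GtA ge k l (.app f as) b
  | prec (l f g) (as bs : List (SExp G)) : PStrict ge f g →
      (∀ b ∈ bs, GtA ge k l (.app f as) b) → bs.length ≤ k →
      GtA ge k (l + 1) (.app f as) (.app g bs)
  | toLst (l f) (as bs : List (SExp G)) :
      (∀ b ∈ bs, GtA ge k l (.app f as) b) →
      bs.length ≤ SExp.width (.app f as) + k →
      GtA ge k (l + 1) (.app f as) (.lst bs)
  | lst (l) (as bs cs : List (SExp G)) (h : cs.length = as.length)
      (str : Fin as.length → Bool) (i₀ : Fin as.length) :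
      SEqv ge (.lst bs) (SExp.catAll cs) →
      (∀ i : Fin as.length, str i = true →
        GtA ge k l (as.get i) (cs.get (Fin.cast h.symm i))) →
      (∀ i : Fin as.length, str i = false →
        SEqv ge (as.get i) (cs.get (Fin.cast h.symm i))) →
      str i₀ = true →
      bs.length ≤ SExp.width (.lst as) + k →
      GtA ge k l (.lst as) (.lst bs)

/-- The finite approximations `≫ₖ,ₗ` of the polynomial path order on sequences:
the least extension of `⊐ₖ,ₗ` by the clauses (b1)–(b4).  The strict multiset
comparison in the `equiv` case (b2) is stated in Skolemized form. -/
inductive GtF {G : Type} (ge : G → G → Prop) (k : ℕ) : ℕ → SExp G → SExp G → Prop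
  | base (l a b) : GtA ge k l a b → GtF ge k l a b
  | sub (l f) (as : List (SExp G)) (i : Fin as.length) (b) :
      GtF ge k l (as.get i) b → GtF ge k l (.app f as) b
  | equiv (l f g) (as bs : List (SExp G))
      (Z₁ Z₂ X : Multiset (SExp G)) (Y : List (SExp G)) (w : Fin Y.length → SExp G) :
      PEquiv ge f g →
      (↑as : Multiset (SExp G)) = Z₁ + X →
      (↑bs : Multiset (SExp G)) = Z₂ + (↑Y : Multiset (SExp G)) →
      Multiset.Rel (SEqv ge) Z₁ Z₂ → X ≠ 0 →
      (∀ j, w j ∈ X) → (∀ j, GtF ge k l (w j) (Y.get j)) →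
      bs.length ≤ k →
      GtF ge k l (.app f as) (.app g bs)
  | toLst (l f) (as bs : List (SExp G)) (j₀ : Fin bs.length) :
      GtF ge k l (.app f as) (bs.get j₀) →
      (∀ j : Fin bs.length, j ≠ j₀ → GtA ge k l (.app f as) (bs.get j)) →
      bs.length ≤ SExp.width (.app f as) + k →
      GtF ge k (l + 1) (.app f as) (.lst bs)
  | lst (l) (as bs cs : List (SExp G)) (h : cs.length = as.length)
      (str : Fin as.length → Bool) (i₀ : Fin as.length) :
      SEqv ge (.lst bs) (SExp.catAll cs) →
      (∀ i : Fin as.length, str i = true →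
        GtF ge k l (as.get i) (cs.get (Fin.cast h.symm i))) →
      (∀ i : Fin as.length, str i = false →
        SEqv ge (as.get i) (cs.get (Fin.cast h.symm i))) →
      str i₀ = true →
      bs.length ≤ SExp.width (.lst as) + k →
      GtF ge k l (.lst as) (.lst bs)

/-! ## The normalised signature and predicative interpretations -/

/-- Lifting of a precedence on `F` to the normalised signature `Fn ∪ {•}`
(modelled as `Option F`, where `some f` is `fn` and `none` is the fresh
constant `•`): `fn ≿ gn` iff `f ≿ g`, and every `fn` lies strictly above `•`. -/
def liftge (ge : F → F → Prop) : Option F → Option F → Prop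
  | some f, some g => ge f g
  | _, none => True
  | none, some _ => False

/-- The (0-based) normal argument positions of `f`, in increasing order. -/
def normalIdxs (ar : F → ℕ) (safe : F → ℕ → Bool) (f : F) : List ℕ :=
  (List.range (ar f)).filter (fun i => safe f i = false)

/-- The (0-based) safe argument positions of `f`, in increasing order. -/
def safeIdxs (ar : F → ℕ) (safe : F → ℕ → Bool) (f : F) : List ℕ :=
  (List.range (ar f)).filter (fun i => safe f i = true)

/-- Arities on the normalised signature: `fn` keeps only the normal argument
positions of `f`; the fresh constant `•` has no arguments. -/
def snar (ar : F → ℕ) (safe : F → ℕ → Bool) : Option F → ℕ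
  | none => 0
  | some f => (normalIdxs ar safe f).length

/-- The fresh constant `•`. -/
def bullet {F : Type} : SExp (Option F) := .app none []

/-- The tally sequence `n̂` encoding the natural number `n`. -/
def tally {F : Type} (n : ℕ) : SExp (Option F) := .lst (List.replicate n bullet)

/-- The norm `‖t‖` of a term: like the depth, but only safe argument positions
are taken into account. -/
def norm (safe : F → ℕ → Bool) : Tm F → ℕ
  | .var _ => 1
  | .app f ss =>
      1 + ((((ss.attach.map (fun t => norm safe t.1)).zipIdx.map Prod.swap).filter
              (fun p => safe f p.1 = true)).map Prod.snd).foldr max 0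
decreasing_by
  simp only [Tm.app.sizeOf_spec]; have := List.sizeOf_lt_of_mem t.2; omega

open Classical in
/-- The predicative interpretation `S` w.r.t. a TRS `R`:
`S(t) = []` if `t` is a normal form of `R`, and otherwise
`S(f(s₁,…,sₖ; sₖ₊₁,…,sₖ₊ₗ)) = [fn(N(s₁),…,N(sₖ))] @ S(sₖ₊₁) @ ⋯ @ S(sₖ₊ₗ)`,
where `N(t) = S(t) @ ‖t‖̂`. -/
noncomputable def Sint (R : List (Tm F × Tm F)) (ar : F → ℕ) (safe : F → ℕ → Bool) :
    Tm F → SExp (Option F)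
  | .var _ => .lst []
  | .app f ss =>
      if IsNF R (Tm.app f ss) then .lst []
      else
        let sInt := ss.attach.map (fun t => Sint R ar safe t.1)
        let nInt := ss.attach.map (fun t =>
          SExp.cat (Sint R ar safe t.1) (tally (norm safe t.1)))
        .lst (SExp.app (some f)
                ((normalIdxs ar safe f).map (fun i => nInt.getD i (.lst []))) ::
              ((safeIdxs ar safe f).map
                (fun i => (sInt.getD i (.lst [])).toL)).foldr (· ++ ·) [])
decreasing_by
  all_goals (simp only [Tm.app.sizeOf_spec]; have := List.sizeOf_lt_of_mem t.2; omega)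

/-- The predicative interpretation `N`: `N(t) = S(t) @ ‖t‖̂`. -/
noncomputable def Nint (R : List (Tm F × Tm F)) (ar : F → ℕ) (safe : F → ℕ → Bool)
    (t : Tm F) : SExp (Option F) :=
  SExp.cat (Sint R ar safe t) (tally (norm safe t))

/-! ## Measures -/

/-- `hFun k c ms = Σᵢ srt(i)·c^(k−i)` where `srt(i)` is the `i`-th largest
entry of `ms` (1-based): the order-preserving homomorphism `h(k,n,c)`. -/
def hFun (k c : ℕ) (ms : List ℕ) : ℕ :=
  (((ms.insertionSort (· ≥ ·)).zipIdx.map Prod.swap).map (fun p => p.2 * c ^ (k - 1 - p.1))).sum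

/-- `M(k,n)(a₁,…,aₙ) = h(k,n,c)(Gf a₁,…,Gf aₙ)` with `c = 1 + max Gf aᵢ`. -/
def Mfun {α : Type*} (Gf : α → ℕ) (k : ℕ) (as : List α) : ℕ :=
  hFun k (1 + (as.map Gf).foldr max 0) (as.map Gf)

/-- `Gf` measures the length of maximal descending `ord`-chains on ground
elements: `Gf a = sup {Gf b + 1 | b ground, a ord b}`. -/
def IsChainMeasure {β : Type*} (ground : β → Prop) (ord : β → β → Prop) (Gf : β → ℕ) : Prop :=
  ∀ a, ground a → Gf a = sSup {m | ∃ b, ground b ∧ ord a b ∧ m = Gf b + 1}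

/-- `rk` is the rank function of the precedence `ge`:
`rk f = max({0} ∪ {1 + rk g | f ≻ g})`. -/
def IsRank {G : Type*} (ge : G → G → Prop) (rk : G → ℕ) : Prop :=
  ∀ f, rk f = sSup {m | ∃ g, PStrict ge f g ∧ m = rk g + 1}

/-- The constants `d(k,p)`. -/
def dconst (k : ℕ) : ℕ → ℕ
  | 0 => k + 1
  | p + 1 => (dconst k p * k) ^ (k + 1) + 1

/-- The constants `c(k,p)`. -/
def cconst (k : ℕ) : ℕ → ℕ
  | 0 => k ^ k
  | p + 1 => (cconst k p * k) ^ ((Finset.Icc 1 k).sum fun i => (k * dconst k p) ^ i)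

/-- The auxiliary functions `g(k,l,p)(m)` (here `gfun k p l m`). -/
def gfun (k p : ℕ) : ℕ → ℕ → ℕ
  | l, m =>
    if p = 0 then k ^ l * m ^ l
    else
      match l with
      | 0 => m
      | 1 => m
      | l' + 2 => cconst k (p - 1) * (m * gfun k p (l' + 1) m) ^ (k * dconst k (p - 1))

end PPO

namespace PPO

/-! **Statement 1** (Lemma 15 of the paper): the family of TRSs `R_k`. -/

/-- The signature of `R_k`: the defined symbol `f_k` (here `fk`), the unary
constructor `s` and the constant `0` (here `z`). -/
inductive SymK : Type
  | fk | s | z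
deriving DecidableEq

instance : Fintype SymK :=
  ⟨{.fk, .s, .z}, by intro x; cases x <;> simp⟩

/-- Arities: `f_k` is `k`-ary, `s` unary, `0` a constant. -/
def arK (k : ℕ) : SymK → ℕ
  | .fk => k
  | .s => 1
  | .z => 0

/-- `f_k` is the only defined symbol. -/
def isDefK : SymK → Bool
  | .fk => true
  | .s => false
  | .z => false

/-- All argument positions of `f_k` are normal; constructor positions are safe. -/
def safeK : SymK → ℕ → Bool
  | .fk, _ => false
  | .s, _ => true
  | .z, _ => true

def zeroK : Tm SymK := .app .z []

def sK (t : Tm SymK) : Tm SymK := .app .s [t]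

/-- Numerals `s^n(0)`. -/
def numK : ℕ → Tm SymK
  | 0 => zeroK
  | n + 1 => sK (numK n)

/-- The left-hand side of the `(j+1)`-st rule (0-based `j < k`):
`f_k(0,…,0, s(x_j), x_{j+1}, …, x_{k-1})` with `j` leading `0`s. -/
def lhsK (k j : ℕ) : Tm SymK :=
  .app .fk (List.replicate j zeroK ++ sK (.var j) ::
    (List.range (k - j - 1)).map (fun i => .var (j + 1 + i)))

/-- The right-hand side of the `(j+1)`-st rule:
`f_k(x_j,…,x_j, x_{j+1}, …, x_{k-1})` with `j+1` leading copies of `x_j`. -/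
def rhsK (k j : ℕ) : Tm SymK :=
  .app .fk (List.replicate (j + 1) (.var j) ++
    (List.range (k - j - 1)).map (fun i => .var (j + 1 + i)))

/-- The TRS `R_k`. -/
def RK (k : ℕ) : List (Tm SymK × Tm SymK) :=
  (List.range k).map (fun j => (lhsK k j, rhsK k j))


/-! ### Auxiliary lemmas -/

section Aux

theorem Tm.subst_app {F : Type} (σ : ℕ → Tm F) (f : F) (ts : List (Tm F)) :
    (Tm.app f ts).subst σ = .app f (ts.map (fun t => t.subst σ)) := by
  rw [Tm.subst]; congr 1; exact List.attach_map_val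

theorem Tm.size_app {F : Type} (f : F) (ts : List (Tm F)) :
    (Tm.app f ts).size = 1 + (ts.map Tm.size).sum := by
  rw [Tm.size]; congr 1; congr 1; exact List.attach_map_val

theorem Tm.varList_app {F : Type} (f : F) (ts : List (Tm F)) :
    (Tm.app f ts).varList = (ts.map Tm.varList).foldr (· ++ ·) [] := by
  rw [Tm.varList]; congr 1; exact List.attach_map_val

theorem mem_foldr_append {α β : Type*} {x : α} {l : List β} {g : β → List α} :
    x ∈ (l.map g).foldr (· ++ ·) [] ↔ ∃ b ∈ l, x ∈ g b := by
  induction l with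
  | nil => simp
  | cons a l ih => simp [ih]

theorem numK_subst (σ : ℕ → Tm SymK) (n : ℕ) : (numK n).subst σ = numK n := by
  induction n with
  | zero => simp [numK, zeroK, Tm.subst_app]
  | succ n ih => simp [numK, sK, Tm.subst_app, ih]

theorem size_numK (n : ℕ) : (numK n).size = n + 1 := by
  induction n with
  | zero => simp [numK, zeroK, Tm.size_app]
  | succ n ih => simp [numK, sK, Tm.size_app, ih]; omega

theorem isValue_numK (n : ℕ) : IsValue isDefK (numK n) := by
  induction n with
  | zero => exact .app _ _ rfl (by simp)
  | succ n ih => exact .app _ _ rfl (by simpa [sK] using ih)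

theorem wft_numK (k n : ℕ) : WFT (arK k) (numK n) := by
  induction n with
  | zero => exact .app _ _ rfl (by simp)
  | succ n ih => exact .app _ _ rfl (by simpa [sK] using ih)

theorem mem_RK {k j : ℕ} (hj : j < k) : (lhsK k j, rhsK k j) ∈ RK k := by
  simp only [RK, List.mem_map, List.mem_range]
  exact ⟨j, hj, rfl⟩

theorem RK_lhs_shape {k : ℕ} {l r : Tm SymK} (h : (l, r) ∈ RK k) :
    ∃ ts, l = .app .fk ts := by
  simp only [RK, List.mem_map, List.mem_range] at h
  obtain ⟨j, hj, hjr⟩ := h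
  cases hjr
  exact ⟨_, rfl⟩

theorem rew_inv {F : Type} {R : List (Tm F × Tm F)} {a u : Tm F} (h : Rew R a u) :
    (∃ l r σ, (l, r) ∈ R ∧ a = l.subst σ ∧ u = r.subst σ) ∨
    (∃ f ts₁ ts₂ s t, Rew R s t ∧ a = .app f (ts₁ ++ s :: ts₂) ∧
      u = .app f (ts₁ ++ t :: ts₂)) := by
  cases h with
  | root l r σ hmem => exact Or.inl ⟨l, r, σ, hmem, rfl, rfl⟩
  | congr f ts₁ ts₂ s t hst => exact Or.inr ⟨f, ts₁, ts₂, s, t, hst, rfl, rfl⟩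

theorem numK_NF (k n : ℕ) : IsNF (RK k) (numK n) := by
  induction n with
  | zero =>
    intro u h
    rcases rew_inv h with ⟨l, r, σ, hmem, ha, -⟩ | ⟨f, ts₁, ts₂, s, t, hst, ha, -⟩
    · obtain ⟨ts, rfl⟩ := RK_lhs_shape hmem
      rw [Tm.subst_app] at ha
      exact SymK.noConfusion (Tm.app.inj ha).1
    · have : ([] : List (Tm SymK)) = ts₁ ++ s :: ts₂ := (Tm.app.inj ha).2
      simp at this
  | succ n ih =>
    intro u h
    rcases rew_inv h with ⟨l, r, σ, hmem, ha, -⟩ | ⟨f, ts₁, ts₂, s, t, hst, ha, -⟩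
    · obtain ⟨ts, rfl⟩ := RK_lhs_shape hmem
      rw [Tm.subst_app] at ha
      exact SymK.noConfusion (Tm.app.inj ha).1
    · have h2 : [numK n] = ts₁ ++ s :: ts₂ := (Tm.app.inj ha).2
      match ts₁, h2 with
      | [], h2 =>
        have hs : s = numK n := ((by simpa using h2.symm : s = numK n ∧ ts₂ = [])).1
        exact ih t (hs ▸ hst)
      | (a :: b :: l), h2 => simp at h2
      | [a], h2 => simp at h2


/-- `f_k` applied to numerals encoding the state `a`. -/
def fkOf (a : List ℕ) : Tm SymK := .app .fk (a.map numK)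

theorem range_map_getD (rest : List ℕ) :
    (List.range rest.length).map (fun i => numK (rest.getD i 0)) = rest.map numK := by
  induction rest with
  | nil => simp
  | cons a l ih =>
    rw [List.length_cons, List.range_succ_eq_map]
    simp only [List.map_cons, List.map_map]
    refine congrArg₂ _ rfl ?_
    rw [← ih]
    apply List.map_congr_left
    intro i hi
    rfl

theorem subst_var {F : Type} (σ : ℕ → Tm F) (x : ℕ) : (Tm.var x).subst σ = σ x := by
  rw [Tm.subst]

theorem step_IRew {k : ℕ} (j x : ℕ) (rest : List ℕ) (hj : j < k)
    (hlen : j + 1 + rest.length = k) :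
    IRew (RK k) (fkOf (List.replicate j 0 ++ (x + 1) :: rest))
      (fkOf (List.replicate (j + 1) x ++ rest)) := by
  set σ : ℕ → Tm SymK :=
    fun i => if i ≤ j then numK x else numK (rest.getD (i - (j + 1)) 0) with hσ
  have e0 : Tm.subst σ zeroK = numK 0 := by
    rw [zeroK, Tm.subst_app]; rfl
  have e1 : (List.replicate j zeroK).map (Tm.subst σ) = List.replicate j (numK 0) := by
    rw [List.map_replicate, e0]
  have e2 : Tm.subst σ (sK (Tm.var j)) = numK (x + 1) := by
    rw [show sK (Tm.var j) = Tm.app SymK.s [Tm.var j] from rfl, Tm.subst_app,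
      List.map_cons, List.map_nil, subst_var]
    simp only [hσ, if_pos (le_refl j)]
    rfl
  have e3 : ((List.range (k - j - 1)).map (fun i => (Tm.var (j + 1 + i) : Tm SymK))).map
      (Tm.subst σ) = rest.map numK := by
    rw [List.map_map]
    have hk : k - j - 1 = rest.length := by omega
    rw [hk, ← range_map_getD rest]
    apply List.map_congr_left
    intro i hi
    show Tm.subst σ (.var (j + 1 + i)) = numK (rest.getD i 0)
    rw [subst_var]
    simp only [hσ]
    rw [if_neg (by omega)]
    have : j + 1 + i - (j + 1) = i := by omega
    rw [this]
  have e2' : Tm.subst σ (Tm.var j) = numK x := by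
    rw [subst_var]; simp only [hσ, if_pos (le_refl j)]
  have hsub1 : (lhsK k j).subst σ = fkOf (List.replicate j 0 ++ (x + 1) :: rest) := by
    rw [lhsK, Tm.subst_app, fkOf, List.map_append, List.map_cons, List.map_append,
      List.map_replicate, List.map_replicate, e0, e2, e3]
    rfl
  have hsub2 : (rhsK k j).subst σ = fkOf (List.replicate (j + 1) x ++ rest) := by
    rw [rhsK, Tm.subst_app, fkOf, List.map_append, List.map_append,
      List.map_replicate, List.map_replicate, e2', e3]
  have hnf : ∀ l ∈ (List.replicate j zeroK ++ sK (.var j) ::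
      (List.range (k - j - 1)).map (fun i => .var (j + 1 + i))), IsNF (RK k) (l.subst σ) := by
    intro l hl
    rcases List.mem_append.mp hl with hl | hl
    · rw [List.eq_of_mem_replicate hl, e0]; exact numK_NF k 0
    · rcases List.mem_cons.mp hl with rfl | hl
      · rw [e2]; exact numK_NF k _
      · obtain ⟨i, hi, rfl⟩ := List.mem_map.mp hl
        rw [subst_var]
        simp only [hσ]
        rw [if_neg (by omega)]
        exact numK_NF k _
  have := IRew.root (R := RK k) .fk _ (rhsK k j) σ (mem_RK hj) hnf
  rwa [show ((Tm.app SymK.fk (List.replicate j zeroK ++ sK (.var j) ::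
      (List.range (k - j - 1)).map (fun i => .var (j + 1 + i))))) = lhsK k j from rfl,
    hsub1, hsub2] at this

theorem IRew_Rew {F : Type} {R : List (Tm F × Tm F)} {a b : Tm F} (h : IRew R a b) :
    Rew R a b := by
  induction h with
  | root f ls r σ hmem _ => exact Rew.root _ _ σ hmem
  | congr f ts₁ ts₂ s t _ ih => exact Rew.congr f ts₁ ts₂ s t ih

theorem IterRel.trans {α : Type*} {r : α → α → Prop} {m n : ℕ} {a b c : α}
    (h1 : IterRel r m a b) (h2 : IterRel r n b c) : IterRel r (m + n) a c := by
  induction m generalizing a with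
  | zero => have hab : a = b := h1; subst hab; simpa using h2
  | succ m ih =>
    obtain ⟨d, hd, hrest⟩ := h1
    rw [show m + 1 + n = (m + n) + 1 from by omega]
    exact ⟨d, hd, ih hrest⟩

theorem IterRel.mono {α : Type*} {r r' : α → α → Prop} (hrr : ∀ a b, r a b → r' a b)
    {m : ℕ} {a b : α} (h : IterRel r m a b) : IterRel r' m a b := by
  induction m generalizing a with
  | zero => exact h
  | succ m ih => obtain ⟨d, hd, hrest⟩ := h; exact ⟨d, hrr _ _ hd, ih hrest⟩


/-- Lower-bound counting function for the number of rewrite steps. -/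
def cf : ℕ → ℕ → ℕ
  | 0, _ => 0
  | x + 1, j => (x + 1) + ∑ t ∈ Finset.range (j - 1), (1 + cf x (2 + t))

theorem decr {k : ℕ} (hk : 0 < k) (y : ℕ) (tail : List ℕ) (hlen : 1 + tail.length = k) :
    IterRel (IRew (RK k)) y (fkOf (y :: tail)) (fkOf (0 :: tail)) := by
  induction y with
  | zero => rfl
  | succ y ih =>
    have hs := step_IRew (k := k) 0 y tail hk hlen
    simp only [List.replicate_zero, List.nil_append, List.replicate_one, List.cons_append,
      List.replicate_succ] at hs
    exact ⟨_, hs, ih⟩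

theorem inner_run {k x j : ℕ} (rest0 : List ℕ) (hjk : j + rest0.length = k)
    (IH : ∀ j', 1 ≤ j' → ∀ rest : List ℕ, j' + rest.length = k →
      ∃ m, cf x j' ≤ m ∧ IterRel (IRew (RK k)) m
        (fkOf (List.replicate j' x ++ rest)) (fkOf (List.replicate j' 0 ++ rest))) :
    ∀ d i, 1 ≤ i → i + d = j →
    ∃ m, (∑ t ∈ Finset.range d, (1 + cf x (i + 1 + t))) ≤ m ∧
      IterRel (IRew (RK k)) m
        (fkOf (List.replicate i 0 ++ (List.replicate d (x + 1) ++ rest0)))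
        (fkOf (List.replicate j 0 ++ rest0)) := by
  intro d
  induction d with
  | zero =>
    intro i hi hij
    refine ⟨0, by simp, ?_⟩
    have : i = j := by omega
    subst this
    show fkOf _ = fkOf _
    simp
  | succ d ihd =>
    intro i hi hij
    have hik : i < k := by omega
    have hstep := step_IRew (k := k) i x (List.replicate d (x + 1) ++ rest0) hik
      (by simp; omega)
    have h1 : fkOf (List.replicate i 0 ++ (List.replicate (d + 1) (x + 1) ++ rest0)) =
        fkOf (List.replicate i 0 ++ (x + 1) :: (List.replicate d (x + 1) ++ rest0)) := by
      rw [List.replicate_succ, List.cons_append]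
    obtain ⟨m₁, hm₁, hit₁⟩ := IH (i + 1) (by omega) (List.replicate d (x + 1) ++ rest0)
      (by simp; omega)
    obtain ⟨m₂, hm₂, hit₂⟩ := ihd (i + 1) (by omega) (by omega)
    have hass : List.replicate (i + 1) x ++ (List.replicate d (x + 1) ++ rest0) =
        List.replicate (i + 1) x ++ List.replicate d (x + 1) ++ rest0 := by
      rw [List.append_assoc]
    refine ⟨1 + (m₁ + m₂), ?_, ?_⟩
    · rw [Finset.sum_range_succ']
      have : (∑ t ∈ Finset.range d, (1 + cf x (i + 1 + (t + 1)))) =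
          ∑ t ∈ Finset.range d, (1 + cf x (i + 1 + 1 + t)) := by
        apply Finset.sum_congr rfl
        intro t _
        congr 2
        omega
      rw [this]
      simp only [Nat.add_zero]
      omega
    · rw [h1]
      refine IterRel.trans (m := 1) ⟨_, hstep, rfl⟩ ?_
      refine IterRel.trans ?_ hit₂
      convert hit₁ using 3

theorem run {k : ℕ} (hk : 1 ≤ k) (x : ℕ) :
    ∀ j, 1 ≤ j → ∀ rest : List ℕ, j + rest.length = k →
    ∃ m, cf x j ≤ m ∧ IterRel (IRew (RK k)) m
      (fkOf (List.replicate j x ++ rest)) (fkOf (List.replicate j 0 ++ rest)) := by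
  induction x with
  | zero => intro j hj rest hlen; exact ⟨0, by simp [cf], rfl⟩
  | succ x ih =>
    intro j hj rest hlen
    have hdecr := decr (k := k) (by omega) (x + 1) (List.replicate (j - 1) (x + 1) ++ rest)
      (by simp; omega)
    have h1 : List.replicate j (x + 1) ++ rest =
        (x + 1) :: (List.replicate (j - 1) (x + 1) ++ rest) := by
      rw [← List.cons_append]
      congr 1
      rw [← List.replicate_succ]
      congr 1
      omega
    obtain ⟨m₂, hm₂, hit₂⟩ := inner_run (k := k) (x := x) (j := j) rest hlen ih (j - 1) 1
      le_rfl (by omega)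
    refine ⟨(x + 1) + m₂, ?_, ?_⟩
    · have : (∑ t ∈ Finset.range (j - 1), (1 + cf x (1 + 1 + t))) =
          ∑ t ∈ Finset.range (j - 1), (1 + cf x (2 + t)) := rfl
      rw [cf]
      omega
    · rw [h1]
      refine IterRel.trans hdecr ?_
      have h2 : (0 : ℕ) :: (List.replicate (j - 1) (x + 1) ++ rest) =
          List.replicate 1 0 ++ (List.replicate (j - 1) (x + 1) ++ rest) := rfl
      rw [h2]
      exact hit₂


set_option maxRecDepth 10000 in
theorem cf_ge_choose : ∀ x j, 1 ≤ j → Nat.choose x j ≤ cf x j := by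
  intro x
  induction x with
  | zero => intro j hj; match j, hj with | j + 1, _ => simp [Nat.choose, cf]
  | succ x ih =>
    intro j hj
    match j, hj with
    | 1, _ => rw [Nat.choose_one_right, cf]; simp
    | j' + 2, _ =>
      rw [Nat.choose_succ_succ']
      rw [cf]
      have hsplit : (j' + 2) - 1 = j' + 1 := rfl
      rw [hsplit]
      match j' with
      | 0 =>
        have h2 := ih 2 (by omega)
        have h1 : Nat.choose x 1 = x := Nat.choose_one_right x
        norm_num [Finset.sum_range_one]
        omega
      | j'' + 1 =>
        have hsub : ({j'', j'' + 1} : Finset ℕ) ⊆ Finset.range (j'' + 2) := by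
          intro t ht
          simp at ht
          simp
          omega
        have hpair : (∑ t ∈ ({j'', j'' + 1} : Finset ℕ), (1 + cf x (2 + t))) =
            (1 + cf x (2 + j'')) + (1 + cf x (2 + (j'' + 1))) :=
          Finset.sum_pair (by omega)
        have hle := Finset.sum_le_sum_of_subset (f := fun t => 1 + cf x (2 + t)) hsub
        rw [hpair] at hle
        have ha := ih (j'' + 2) (by omega)
        have hb := ih (j'' + 3) (by omega)
        beta_reduce at hle
        rw [show 2 + j'' = j'' + 2 from by omega,
          show 2 + (j'' + 1) = j'' + 3 from by omega] at hle
        rw [show j'' + 1 + 1 = j'' + 2 from by omega,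
          show j'' + 1 + 2 = j'' + 3 from by omega]
        omega

theorem cf_ge_self (x j : ℕ) : x ≤ cf x j := by
  cases x with
  | zero => exact Nat.zero_le _
  | succ x => rw [cf]; omega

theorem pow_le_cf {n k : ℕ} (hk : 1 ≤ k) (hn : 1 ≤ n) :
    n ^ k ≤ k ^ k * k.factorial * cf n k := by
  rcases le_or_gt n k with hnk | hkn
  · calc n ^ k = n ^ (k - 1) * n := by rw [← pow_succ]; congr 1; omega
    _ ≤ k ^ (k - 1) * n := Nat.mul_le_mul_right n (Nat.pow_le_pow_left hnk _)
    _ ≤ (k ^ k * k.factorial) * cf n k := by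
        apply Nat.mul_le_mul
        · calc k ^ (k - 1) ≤ k ^ k := Nat.pow_le_pow_right (by omega) (by omega)
          _ ≤ k ^ k * k.factorial :=
              Nat.le_mul_of_pos_right _ (Nat.factorial_pos k)
        · exact cf_ge_self n k
    _ = k ^ k * k.factorial * cf n k := rfl
  · have hkn' : k ≤ n := le_of_lt hkn
    have hdesc : n ^ k ≤ k ^ k * n.descFactorial k := by
      rw [Nat.descFactorial_eq_prod_range]
      rw [show (k : ℕ) ^ k = ∏ _i ∈ Finset.range k, k by
        rw [Finset.prod_const, Finset.card_range]]
      rw [← Finset.prod_mul_distrib]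
      rw [show (n : ℕ) ^ k = ∏ _i ∈ Finset.range k, n by
        rw [Finset.prod_const, Finset.card_range]]
      apply Finset.prod_le_prod'
      intro i hi
      rw [Finset.mem_range] at hi
      -- n ≤ k * (n - i)
      have hk1 : k = (k - 1) + 1 := by omega
      rw [hk1, Nat.succ_mul]
      have h2 : k - 1 ≤ (k - 1) * (n - i) := Nat.le_mul_of_pos_right _ (by omega)
      omega
    have hd2 : n.descFactorial k = k.factorial * n.choose k :=
      Nat.descFactorial_eq_factorial_mul_choose n k
    have hch := cf_ge_choose n k hk
    calc n ^ k ≤ k ^ k * n.descFactorial k := hdesc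
    _ = k ^ k * (k.factorial * n.choose k) := by rw [hd2]
    _ = k ^ k * k.factorial * n.choose k := by ring
    _ ≤ k ^ k * k.factorial * cf n k := Nat.mul_le_mul_left _ hch

theorem key_run {k : ℕ} (hk : 1 ≤ k) (n : ℕ) (hn : 1 ≤ n) :
    ∃ m : ℕ, n ^ k ≤ k ^ k * k.factorial * m ∧
      IterRel (IRew (RK k)) m (.app .fk (List.replicate k (numK n)))
        (.app .fk (List.replicate k zeroK)) := by
  obtain ⟨m, hm, hit⟩ := run hk n k hk [] (by simp)
  refine ⟨m, ?_, ?_⟩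
  · calc n ^ k ≤ k ^ k * k.factorial * cf n k := pow_le_cf hk hn
    _ ≤ k ^ k * k.factorial * m := Nat.mul_le_mul_left _ hm
  · have e1 : fkOf (List.replicate k n ++ []) = .app .fk (List.replicate k (numK n)) := by
      simp [fkOf]
    have e2 : fkOf (List.replicate k 0 ++ []) = .app .fk (List.replicate k zeroK) := by
      simp only [fkOf, List.append_nil, List.map_replicate]
      rfl
    rwa [e1, e2] at hit


/-! ### The precedence and compatibility with `⊐pop*` -/

/-- Rank function for the precedence on `SymK`. -/
def rkK : SymK → ℕ
  | .fk => 1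
  | _ => 0

/-- The precedence: `f_k ≻ s ∼ 0`. -/
def geK (f g : SymK) : Prop := rkK g ≤ rkK f

theorem admissible_geK : Admissible isDefK geK := by
  refine ⟨⟨fun f => le_refl _, fun f g h h1 h2 => le_trans h2 h1⟩, ?_⟩
  rintro f g ⟨h1, h2⟩
  cases f <;> cases g <;> simp_all [geK, rkK, isDefK]

theorem safeMap_K (k : ℕ) : SafeMap (arK k) isDefK safeK := by
  intro f hf i _
  cases f
  · exact absurd hf (by simp [isDefK])
  · rfl
  · rfl

theorem varList_var {F : Type} (x : ℕ) : (Tm.var x : Tm F).varList = [x] := by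
  rw [Tm.varList]

theorem varList_sK_var (j : ℕ) : (sK (Tm.var j)).varList = [j] := by
  rw [show sK (Tm.var j) = Tm.app SymK.s [Tm.var j] from rfl, Tm.varList_app]
  simp [varList_var]

theorem isValue_lhs_arg {k j : ℕ} {u : Tm SymK}
    (hu : u ∈ List.replicate j zeroK ++ sK (.var j) ::
      (List.range (k - j - 1)).map (fun i => (.var (j + 1 + i) : Tm SymK))) :
    IsValue isDefK u := by
  rcases List.mem_append.mp hu with hu | hu
  · rw [List.eq_of_mem_replicate hu]
    exact .app _ _ rfl (by simp)
  · rcases List.mem_cons.mp hu with rfl | hu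
    · exact .app _ _ rfl (by rintro t ht; rw [show t = Tm.var j by simpa using ht]; exact .var j)
    · obtain ⟨i, hi, rfl⟩ := List.mem_map.mp hu
      exact .var _

theorem trsK (k : ℕ) : ConstructorTRS (arK k) isDefK (RK k) := by
  constructor
  · intro ρ hρ
    simp only [RK, List.mem_map, List.mem_range] at hρ
    obtain ⟨j, hj, rfl⟩ := hρ
    refine ⟨?_, ?_, ?_, ?_⟩
    · refine WFT.app _ _ ?_ ?_
      · simp [arK]; omega
      · intro t ht
        rcases List.mem_append.mp ht with ht | ht
        · rw [List.eq_of_mem_replicate ht]; exact .app _ _ rfl (by simp)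
        · rcases List.mem_cons.mp ht with rfl | ht
          · exact .app _ _ rfl (by rintro u hu; rw [show u = Tm.var j by simpa using hu]; exact .var j)
          · obtain ⟨i, hi, rfl⟩ := List.mem_map.mp ht
            exact .var _
    · refine WFT.app _ _ ?_ ?_
      · simp [arK]; omega
      · intro t ht
        rcases List.mem_append.mp ht with ht | ht
        · rw [List.eq_of_mem_replicate ht]; exact .var _
        · obtain ⟨i, hi, rfl⟩ := List.mem_map.mp ht
          exact .var _
    · intro x hx
      rw [show ((lhsK k j, rhsK k j) : Tm SymK × Tm SymK).2 = rhsK k j from rfl, rhsK,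
        Tm.varList_app] at hx
      obtain ⟨t, htmem, hxt⟩ := mem_foldr_append.mp hx
      rw [show ((lhsK k j, rhsK k j) : Tm SymK × Tm SymK).1 = lhsK k j from rfl, lhsK,
        Tm.varList_app]
      apply mem_foldr_append.mpr
      rcases List.mem_append.mp htmem with ht | ht
      · rw [List.eq_of_mem_replicate ht, varList_var] at hxt
        refine ⟨sK (.var j), ?_, ?_⟩
        · exact List.mem_append_right _ List.mem_cons_self
        · rw [varList_sK_var]; simpa using hxt
      · obtain ⟨i, hi, rfl⟩ := List.mem_map.mp ht
        exact ⟨Tm.var (j + 1 + i), List.mem_append_right _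
          (List.mem_cons_of_mem _ (List.mem_map.mpr ⟨i, hi, rfl⟩)), hxt⟩
    · rintro ⟨x, hx⟩
      simp [lhsK] at hx
  · intro ρ hρ
    simp only [RK, List.mem_map, List.mem_range] at hρ
    obtain ⟨j, hj, rfl⟩ := hρ
    exact ⟨.fk, _, rfl, rfl, fun u hu => isValue_lhs_arg hu⟩

theorem argsWhere_fk_false (ls : List (Tm SymK)) :
    argsWhere safeK false .fk ls = (↑ls : Multiset (Tm SymK)) := by
  rw [argsWhere]
  congr 1
  have h1 : (ls.zipIdx.map Prod.swap).filter (fun p => decide (safeK .fk p.1 = false)) =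
      ls.zipIdx.map Prod.swap :=
    List.filter_eq_self.mpr (fun p _ => by simp [safeK])
  rw [h1, List.map_map]
  exact List.zipIdx_map_fst 0 ls

theorem argsWhere_fk_true (ls : List (Tm SymK)) :
    argsWhere safeK true .fk ls = 0 := by
  rw [argsWhere]
  have h1 : (ls.zipIdx.map Prod.swap).filter (fun p => decide (safeK .fk p.1 = true)) = [] :=
    List.filter_eq_nil_iff.mpr (fun p _ => by simp [safeK])
  rw [h1]
  rfl

theorem orient (k j : ℕ) (hj : j < k) : GtPop isDefK geK safeK (lhsK k j) (rhsK k j) := by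
  rw [lhsK, rhsK]
  refine GtPop.equivE (isDef := isDefK) (ge := geK) (safe := safeK) .fk .fk _ _
    (↑((List.range (k - j - 1)).map (fun i => (.var (j + 1 + i) : Tm SymK))))
    (↑((List.range (k - j - 1)).map (fun i => (.var (j + 1 + i) : Tm SymK))))
    (↑(List.replicate j zeroK ++ [sK (.var j)]))
    (List.replicate (j + 1) (.var j))
    (fun _ => sK (.var j))
    rfl (⟨le_refl _, le_refl _⟩ : PEquiv geK .fk .fk) ?_ ?_ ?_ ?_ ?_ ?_ ?_
  · rw [argsWhere_fk_false]
    have h1 : List.replicate j zeroK ++ sK (.var j) ::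
        (List.range (k - j - 1)).map (fun i => (.var (j + 1 + i) : Tm SymK)) =
        (List.replicate j zeroK ++ [sK (.var j)]) ++
          (List.range (k - j - 1)).map (fun i => (.var (j + 1 + i) : Tm SymK)) := by
      simp
    rw [h1, ← Multiset.coe_add, add_comm]
  · rw [argsWhere_fk_false, ← Multiset.coe_add, add_comm]
  · exact Multiset.rel_refl_of_refl_on (fun x _ => EqS.refl x)
  · simp
  · intro i
    simp
  · intro i
    rw [List.get_eq_getElem, List.getElem_replicate]
    exact GtPop.subE (isDef := isDefK) (ge := geK) (safe := safeK) .s [Tm.var j]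
      ⟨0, by simp⟩ (Tm.var j) (EqS.refl _)
  · rw [argsWhere_fk_true, argsWhere_fk_true]
    exact Multiset.rel_zero_left.mpr rfl

end Aux





/-- For every `k ≥ 1`, the TRS `R_k` is compatible with a
polynomial path order (hence predicative recursive), and there is a positive
rational `c_k` such that for all `n ≥ 1` the term `f_k(sⁿ(0),…,sⁿ(0))` rewrites
to `f_k(0,…,0)` in at least `c_k·n^k` steps; consequently the innermost runtime
complexity of `R_k` is in `Ω(n^k)`. -/
theorem RK_compatible_and_lower_bound (k : ℕ) (hk : 1 ≤ k) :
    (∃ ge : SymK → SymK → Prop,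
      Admissible isDefK ge ∧ SafeMap (arK k) isDefK safeK ∧
      ConstructorTRS (arK k) isDefK (RK k) ∧
      ∀ ρ ∈ RK k, GtPop isDefK ge safeK ρ.1 ρ.2) ∧
    (∃ c : ℚ, 0 < c ∧ ∀ n : ℕ, 1 ≤ n → ∃ m : ℕ,
      c * (n : ℚ) ^ k ≤ (m : ℚ) ∧
      IterRel (Rew (RK k)) m (.app .fk (List.replicate k (numK n)))
        (.app .fk (List.replicate k zeroK))) ∧
    (∃ c' : ℚ, 0 < c' ∧ ∃ N : ℕ, ∀ n : ℕ, N ≤ n →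
      ∃ (s t : Tm SymK) (m : ℕ),
        IsBasic isDefK s ∧ WFT (arK k) s ∧ Tm.size s ≤ n ∧
        IterRel (IRew (RK k)) m s t ∧ c' * (n : ℚ) ^ k ≤ (m : ℚ)) := by
  have hDpos : 0 < k ^ k * k.factorial :=
    Nat.mul_pos ((Nat.pow_pos (by omega) : 0 < _ ^ k)) (Nat.factorial_pos k)
  refine ⟨?_, ?_, ?_⟩
  · refine ⟨geK, admissible_geK, safeMap_K k, trsK k, ?_⟩
    intro ρ hρ
    simp only [RK, List.mem_map, List.mem_range] at hρ
    obtain ⟨j, hj, rfl⟩ := hρ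
    exact orient k j hj
  · refine ⟨((k ^ k * k.factorial : ℕ) : ℚ)⁻¹, ?_, ?_⟩
    · rw [inv_pos]
      exact_mod_cast hDpos
    · intro n hn
      obtain ⟨m, hb, hit⟩ := key_run hk n hn
      refine ⟨m, ?_, IterRel.mono (fun a b h => IRew_Rew h) hit⟩
      have hD : (0 : ℚ) < ((k ^ k * k.factorial : ℕ) : ℚ) := by exact_mod_cast hDpos
      have hQ : (n : ℚ) ^ k ≤ ((k ^ k * k.factorial : ℕ) : ℚ) * m := by
        exact_mod_cast hb
      calc ((k ^ k * k.factorial : ℕ) : ℚ)⁻¹ * (n : ℚ) ^ k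
          ≤ ((k ^ k * k.factorial : ℕ) : ℚ)⁻¹ * (((k ^ k * k.factorial : ℕ) : ℚ) * m) :=
            mul_le_mul_of_nonneg_left hQ (inv_nonneg.mpr hD.le)
        _ = m := by rw [← mul_assoc, inv_mul_cancel₀ hD.ne', one_mul]
  · refine ⟨(((4 * k) ^ k * (k ^ k * k.factorial) : ℕ) : ℚ)⁻¹, ?_, 4 * k, ?_⟩
    · rw [inv_pos]
      have : 0 < (4 * k) ^ k * (k ^ k * k.factorial) :=
        Nat.mul_pos ((Nat.pow_pos (by omega) : 0 < _ ^ k)) hDpos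
      exact_mod_cast this
    · intro n hn
      set n' := n / (2 * k) with hn'
      have hk2 : 0 < 2 * k := by omega
      have hn'1 : 1 ≤ n' := (Nat.one_le_div_iff hk2).mpr (by omega)
      obtain ⟨m, hb, hit⟩ := key_run hk n' hn'1
      have hmul : 2 * (k * n') ≤ n := by
        have h1 : n' * (2 * k) ≤ n := by rw [hn']; exact Nat.div_mul_le_self n (2 * k)
        have h2 : 2 * (k * n') = n' * (2 * k) := by ring
        omega
      refine ⟨.app .fk (List.replicate k (numK n')), .app .fk (List.replicate k zeroK), m,
        ?_, ?_, ?_, hit, ?_⟩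
      · exact ⟨.fk, _, rfl, rfl, fun u hu => by
          rw [List.eq_of_mem_replicate hu]; exact isValue_numK n'⟩
      · refine WFT.app _ _ (by simp [arK]) ?_
        intro t ht
        rw [List.eq_of_mem_replicate ht]
        exact wft_numK k n'
      · rw [Tm.size_app, List.map_replicate, size_numK, List.sum_replicate, smul_eq_mul,
          Nat.mul_succ]
        omega
      · -- `c' * n^k ≤ m`
        have h4 : n ≤ 4 * k * n' := by
          have hdm := Nat.div_add_mod n (2 * k)
          rw [← hn'] at hdm
          have hmo : n % (2 * k) < 2 * k := Nat.mod_lt _ hk2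
          have e : 4 * k * n' = 2 * (2 * k * n') := by ring
          omega
        have hNat : n ^ k ≤ ((4 * k) ^ k * (k ^ k * k.factorial)) * m := by
          calc n ^ k ≤ (4 * k * n') ^ k := Nat.pow_le_pow_left h4 k
            _ = (4 * k) ^ k * n' ^ k := by rw [mul_pow]
            _ ≤ (4 * k) ^ k * (k ^ k * k.factorial * m) := Nat.mul_le_mul_left _ hb
            _ = ((4 * k) ^ k * (k ^ k * k.factorial)) * m := by ring
        have hD : (0 : ℚ) < (((4 * k) ^ k * (k ^ k * k.factorial) : ℕ) : ℚ) := by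
          have : 0 < (4 * k) ^ k * (k ^ k * k.factorial) :=
            Nat.mul_pos ((Nat.pow_pos (by omega) : 0 < _ ^ k)) hDpos
          exact_mod_cast this
        have hQ : (n : ℚ) ^ k ≤ (((4 * k) ^ k * (k ^ k * k.factorial) : ℕ) : ℚ) * m := by
          exact_mod_cast hNat
        calc (((4 * k) ^ k * (k ^ k * k.factorial) : ℕ) : ℚ)⁻¹ * (n : ℚ) ^ k
            ≤ (((4 * k) ^ k * (k ^ k * k.factorial) : ℕ) : ℚ)⁻¹ *
              ((((4 * k) ^ k * (k ^ k * k.factorial) : ℕ) : ℚ) * m) :=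
              mul_le_mul_of_nonneg_left hQ (inv_nonneg.mpr hD.le)
          _ = m := by rw [← mul_assoc, inv_mul_cancel₀ hD.ne', one_mul]

end PPO
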